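/- arXiv:1407.7014 — 5 statements merged into one kernel-verified Lean document; each statement's English description precedes it below -/
import Mathlib

section
/- Let V be a finite abelian group and k a field whose group of units k* is divisible. Then the map Alt : Z²(V,k*) → Hom(V×V, k*) sending a 2-cocycle α to the function (x,y) ↦ α(x,y)/α(y,x) takes values in skew-symmetric bicharacters, is a group homomorphism, and induces an isomorphism H²(V,k*) ≅ ∧²V̂, the group of skew-symmetric bicharacters on V with values in k*. -/
/-- A normalized 2-cocycle on a finite abelian group `V` with values in `kˣ`
(with trivial action). -/
def IsCocycle3 {V k : Type} [CommGroup V] [Field k] (α : V → V → kˣ) : Prop :=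
  (∀ x, α 1 x = 1 ∧ α x 1 = 1) ∧
  ∀ x y z, α x y * α (x * y) z = α y z * α x (y * z)

/-- A skew-symmetric bicharacter on `V` with values in `kˣ`. -/
def IsSkewBichar3 {V k : Type} [CommGroup V] [Field k] (ω : V → V → kˣ) : Prop :=
  (∀ x y z, ω (x * y) z = ω x z * ω y z) ∧
  (∀ x y z, ω x (y * z) = ω x y * ω x z) ∧
  (∀ x, ω x x = 1)

/-- A 2-coboundary on `V` with values in `kˣ`. -/
def IsCoboundary3 {V k : Type} [CommGroup V] [Field k] (β : V → V → kˣ) : Prop :=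
  ∃ η : V → kˣ, η 1 = 1 ∧ ∀ x y, β x y = η x * η y * (η (x * y))⁻¹


section S3Aux

variable {V k : Type} [CommGroup V] [Field k]




lemma cocycle_rw {α : V → V → kˣ}
    (hc : ∀ x y z : V, α x y * α (x * y) z = α y z * α x (y * z)) (x y z : V) :
    α (x * y) z = α y z * α x (y * z) * (α x y)⁻¹ := by
  rw [eq_mul_inv_iff_mul_eq, mul_comm (α (x*y) z) (α x y)]
  exact hc x y z

lemma key_id {α : V → V → kˣ}
    (hc : ∀ x y z : V, α x y * α (x * y) z = α y z * α x (y * z)) (x y z : V) :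
    α (x*y) z * (α z (x*y))⁻¹ = (α x z * (α z x)⁻¹) * (α y z * (α z y)⁻¹) := by
  have h1 := cocycle_rw hc x y z
  have h2 : α z (x * y) = α z x * α (x * z) y * (α x y)⁻¹ := by
    rw [eq_mul_inv_iff_mul_eq, mul_comm (α z (x*y)) (α x y), mul_comm x z]
    exact (hc z x y).symm
  have h3 : α (x * z) y = α z y * α x (y * z) * (α x z)⁻¹ := by
    rw [eq_mul_inv_iff_mul_eq, mul_comm (α (x*z) y) (α x z), mul_comm y z]
    exact hc x z y
  rw [h1, h2, h3, ← Units.val_inj]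
  push_cast; field_simp



lemma alt_skew {α : V → V → kˣ}
    (hn : ∀ x : V, α 1 x = 1 ∧ α x 1 = 1)
    (hc : ∀ x y z : V, α x y * α (x * y) z = α y z * α x (y * z)) :
    (∀ x y z : V, α (x*y) z * (α z (x*y))⁻¹ = (α x z * (α z x)⁻¹) * (α y z * (α z y)⁻¹))
    ∧ (∀ x y z : V, α x (y*z) * (α (y*z) x)⁻¹ = (α x y * (α y x)⁻¹) * (α x z * (α z x)⁻¹))
    ∧ (∀ x : V, α x x * (α x x)⁻¹ = 1) := by
  refine ⟨key_id hc, ?_, fun x => by simp⟩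
  intro x y z
  have hswap : ∀ a b : V, α a b * (α b a)⁻¹ = (α b a * (α a b)⁻¹)⁻¹ := by
    intro a b; rw [mul_inv_rev, inv_inv]
  rw [hswap x (y*z), key_id hc y z x, hswap x y, hswap x z, ← Units.val_inj]
  push_cast; field_simp



structure Tw3 (V k : Type) [CommGroup V] [Field k] where
  v : V
  u : kˣ


def twMul (γ : V → V → kˣ) (p q : Tw3 V k) : Tw3 V k :=
  ⟨p.v * q.v, p.u * q.u * γ p.v q.v⟩

def twInv (γ : V → V → kˣ) (p : Tw3 V k) : Tw3 V k :=
  ⟨p.v⁻¹, p.u⁻¹ * (γ p.v p.v⁻¹)⁻¹⟩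

def twCommGroup (γ : V → V → kˣ)
    (hn : ∀ x : V, γ 1 x = 1 ∧ γ x 1 = 1)
    (hc : ∀ x y z : V, γ x y * γ (x * y) z = γ y z * γ x (y * z))
    (hs : ∀ x y : V, γ x y = γ y x) : CommGroup (Tw3 V k) where
  mul := twMul γ
  one := ⟨1, 1⟩
  inv := twInv γ
  mul_assoc p q r := by
    show twMul γ (twMul γ p q) r = twMul γ p (twMul γ q r)
    have h := hc p.v q.v r.v
    simp only [twMul]
    refine congrArg₂ Tw3.mk (mul_assoc _ _ _) ?_
    rw [← Units.val_inj] at h ⊢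
    push_cast at h ⊢
    linear_combination (↑(p.u) * ↑(q.u) * ↑(r.u) : k) * h
  one_mul p := by
    show twMul γ ⟨1, 1⟩ p = p
    simp only [twMul, (hn p.v).1]
    simp
  mul_one p := by
    show twMul γ p ⟨1, 1⟩ = p
    simp only [twMul, (hn p.v).2]
    simp
  inv_mul_cancel p := by
    show twMul γ (twInv γ p) p = ⟨1, 1⟩
    simp only [twMul, twInv]
    refine congrArg₂ Tw3.mk (inv_mul_cancel _) ?_
    rw [hs p.v⁻¹ p.v, ← Units.val_inj]
    push_cast; field_simp
  mul_comm p q := by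
    show twMul γ p q = twMul γ q p
    simp only [twMul]
    refine congrArg₂ Tw3.mk (mul_comm _ _) ?_
    rw [hs p.v q.v, ← Units.val_inj]
    push_cast
    ring

noncomputable def divAdd (hdiv : ∀ m : ℕ, m ≠ 0 → ∀ a : kˣ, ∃ b : kˣ, b ^ m = a) :
    DivisibleBy (Additive kˣ) ℤ :=
  letI : RootableBy kˣ ℕ := rootableByOfPowLeftSurj _ _
    (fun {n} hn x => (hdiv n hn x).imp fun _ hb => hb)
  letI : RootableBy kˣ ℤ := Group.rootableByIntOfRootableByNat kˣ
  { div := fun a n => Additive.ofMul (RootableBy.root a.toMul n)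
    div_zero := fun a => congrArg Additive.ofMul (RootableBy.root_zero a.toMul)
    div_cancel := fun {n} a hn => by
      apply Additive.toMul.injective
      show Additive.toMul (n • Additive.ofMul (RootableBy.root (Additive.toMul a) n)) = _
      rw [toMul_zsmul]
      exact RootableBy.root_cancel _ hn }

theorem symm_cocycle_coboundary
    (hdiv : ∀ m : ℕ, m ≠ 0 → ∀ a : kˣ, ∃ b : kˣ, b ^ m = a)
    (γ : V → V → kˣ)
    (hn : ∀ x : V, γ 1 x = 1 ∧ γ x 1 = 1)
    (hc : ∀ x y z : V, γ x y * γ (x * y) z = γ y z * γ x (y * z))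
    (hs : ∀ x y : V, γ x y = γ y x) :
    ∃ η : V → kˣ, η 1 = 1 ∧ ∀ x y, γ x y = η x * η y * (η (x * y))⁻¹ := by
  letI G := twCommGroup γ hn hc hs
  letI : DivisibleBy (Additive kˣ) ℤ := divAdd hdiv
  -- inclusion kˣ → Tw3
  have hi_mul : ∀ a b : kˣ, (⟨1, a * b⟩ : Tw3 V k) = twMul γ ⟨1, a⟩ ⟨1, b⟩ := by
    intro a b
    simp only [twMul, (hn 1).1]
    simp
  let i : Additive kˣ →+ Additive (Tw3 V k) :=
    AddMonoidHom.mk' (fun a => Additive.ofMul (⟨1, a.toMul⟩ : Tw3 V k))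
      (fun a b => congrArg Additive.ofMul (hi_mul a.toMul b.toMul))
  have hinj : Function.Injective i := by
    intro a b hab
    have := congrArg (fun p => (Additive.toMul p).u) hab
    simpa [i] using this
  obtain ⟨r, hr⟩ := (Module.Baer.of_divisible (Additive kˣ)).extension_property_addMonoidHom
    i hinj (AddMonoidHom.id _)
  have hri : ∀ a : kˣ, r (Additive.ofMul (⟨1, a⟩ : Tw3 V k)) = Additive.ofMul a := by
    intro a
    exact congrFun (congrArg (fun f => f.toFun) hr) (Additive.ofMul a)
  refine ⟨fun x => (r (Additive.ofMul (⟨x, 1⟩ : Tw3 V k))).toMul, ?_, ?_⟩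
  · show Additive.toMul (r (Additive.ofMul (1 : Tw3 V k))) = 1
    rw [ofMul_one, map_zero]; rfl
  · intro x y
    have hxy : twMul γ (⟨x, 1⟩ : Tw3 V k) ⟨y, 1⟩ = twMul γ ⟨x * y, 1⟩ ⟨1, γ x y⟩ := by
      simp only [twMul, (hn (x*y)).2]
      simp
    have hmul : ∀ p q : Tw3 V k, Additive.ofMul (twMul γ p q)
        = Additive.ofMul p + Additive.ofMul q := fun _ _ => rfl
    have := congrArg r (congrArg Additive.ofMul hxy)
    rw [hmul, hmul, map_add, map_add, hri] at this
    have htm := congrArg Additive.toMul this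
    rw [toMul_add, toMul_add, toMul_ofMul] at htm
    refine eq_mul_inv_iff_mul_eq.mpr ?_
    exact (mul_comm _ _).trans htm.symm


lemma pow_mod_eq (u : kˣ) (N : ℕ) (hu : u ^ N = 1) (s : ℕ) : u ^ s = u ^ (s % N) := by
  conv_lhs => rw [← Nat.div_add_mod s N, pow_add, pow_mul, hu, one_pow, one_mul]

lemma pow_congr_mod (u : kˣ) (N : ℕ) (hu : u ^ N = 1) {s t : ℕ} (h : s % N = t % N) :
    u ^ s = u ^ t := by
  rw [pow_mod_eq u N hu s, pow_mod_eq u N hu t, h]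

noncomputable def mkAlpha {ι : Type} [Fintype ι] [LinearOrder ι] {n : ι → ℕ}
    (u : ι → ι → kˣ) (f : V → ∀ i, ZMod (n i)) : V → V → kˣ :=
  fun x y => ∏ i, ∏ j, if i < j then u i j ^ ((f x i).val * (f y j).val) else 1

theorem skew_surj [Fintype V] (ω : V → V → kˣ)
    (hmul1 : ∀ x y z : V, ω (x * y) z = ω x z * ω y z)
    (hmul2 : ∀ x y z : V, ω x (y * z) = ω x y * ω x z)
    (hdiag : ∀ x : V, ω x x = 1) :
    ∃ α : V → V → kˣ,
      ((∀ x : V, α 1 x = 1 ∧ α x 1 = 1) ∧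
        ∀ x y z : V, α x y * α (x * y) z = α y z * α x (y * z)) ∧
      ∀ x y, α x y * (α y x)⁻¹ = ω x y := by
  classical
  -- first-argument and second-argument monoid homs
  have hone1 : ∀ y : V, ω 1 y = 1 := by
    intro y
    have h := hmul1 1 1 y
    rw [one_mul] at h
    exact left_eq_mul.mp h
  have hone2 : ∀ x : V, ω x 1 = 1 := by
    intro x
    have h := hmul2 x 1 1
    rw [one_mul] at h
    exact left_eq_mul.mp h
  -- the monoid homs in each argument
  let Φ : V → V →* kˣ := fun y => ⟨⟨fun a => ω a y, hone1 y⟩, fun a b => hmul1 a b y⟩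
  let Ψ : V → V →* kˣ := fun a => ⟨⟨fun y => ω a y, hone2 a⟩, fun y z => hmul2 a y z⟩
  have hskew : ∀ a b : V, (ω b a)⁻¹ = ω a b := by
    intro a b
    have h := hdiag (a * b)
    rw [hmul1, hmul2, hmul2, hdiag, hdiag, one_mul, mul_one] at h
    exact inv_eq_of_mul_eq_one_left h
  -- structure theorem
  obtain ⟨ι, hι, n, hn, ⟨e0⟩⟩ := AddCommGroup.equiv_directSum_zmod_of_finite' (Additive V)
  haveI : ∀ i, NeZero (n i) := fun i => ⟨by have := hn i; omega⟩
  letI : LinearOrder ι := LinearOrder.lift' (Fintype.equivFin ι) (Equiv.injective _)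
  let eP : Additive V ≃+ (∀ i, ZMod (n i)) := e0.trans (DirectSum.addEquivProd _)
  let f : V → ∀ i, ZMod (n i) := fun v => eP (Additive.ofMul v)
  let g : ι → V := fun i => Additive.toMul (eP.symm (Pi.single i 1))
  let u : ι → ι → kˣ := fun i j => ω (g i) (g j)
  have hf_mul : ∀ (x y : V) (i : ι), f (x * y) i = f x i + f y i := by
    intro x y i
    show eP (Additive.ofMul (x * y)) i = _
    rw [ofMul_mul, map_add]
    rfl
  have hf_one : ∀ i, f 1 i = 0 := by
    intro i
    show eP (Additive.ofMul 1) i = 0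
    rw [ofMul_one, map_zero]
    rfl
  have hg_pow : ∀ i, g i ^ n i = 1 := by
    intro i
    show Additive.toMul (eP.symm (Pi.single i 1)) ^ (n i) = 1
    rw [← toMul_nsmul, ← map_nsmul, ← Pi.single_smul, nsmul_eq_mul, mul_one,
      ZMod.natCast_self, Pi.single_zero, map_zero]
    rfl
  have hu_pow1 : ∀ i j, u i j ^ n i = 1 := by
    intro i j
    have h := map_pow (Φ (g j)) (g i) (n i)
    rw [hg_pow i, map_one] at h
    exact h.symm
  have hu_pow2 : ∀ i j, u i j ^ n j = 1 := by
    intro i j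
    have h := map_pow (Ψ (g i)) (g j) (n j)
    rw [hg_pow j, map_one] at h
    exact h.symm
  have hpow_left : ∀ (i j : ι) (a b : ZMod (n i)) (c : ℕ),
      u i j ^ ((a + b).val * c) = u i j ^ (a.val * c) * u i j ^ (b.val * c) := by
    intro i j a b c
    rw [← pow_add]
    refine pow_congr_mod _ _ (hu_pow1 i j) ?_
    have h1 : (a + b).val * c ≡ (a.val + b.val) * c [MOD n i] := by
      rw [ZMod.val_add]
      exact (Nat.mod_modEq _ _).mul_right c
    rw [add_mul] at h1
    exact h1
  have hpow_right : ∀ (i j : ι) (c : ℕ) (a b : ZMod (n j)),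
      u i j ^ (c * (a + b).val) = u i j ^ (c * a.val) * u i j ^ (c * b.val) := by
    intro i j c a b
    rw [← pow_add]
    refine pow_congr_mod _ _ (hu_pow2 i j) ?_
    have h1 : c * (a + b).val ≡ c * (a.val + b.val) [MOD n j] := by
      rw [ZMod.val_add]
      exact (Nat.mod_modEq _ _).mul_left c
    rw [mul_add] at h1
    exact h1
  have hα_left : ∀ x y z : V, mkAlpha u f (x * y) z = mkAlpha u f x z * mkAlpha u f y z := by
    intro x y z
    show (∏ i, ∏ j, if i < j then u i j ^ ((f (x*y) i).val * (f z j).val) else 1)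
      = (∏ i, ∏ j, if i < j then u i j ^ ((f x i).val * (f z j).val) else 1)
        * (∏ i, ∏ j, if i < j then u i j ^ ((f y i).val * (f z j).val) else 1)
    rw [← Finset.prod_mul_distrib]
    refine Finset.prod_congr rfl fun i _ => ?_
    rw [← Finset.prod_mul_distrib]
    refine Finset.prod_congr rfl fun j _ => ?_
    by_cases hij : i < j
    · rw [if_pos hij, if_pos hij, if_pos hij, hf_mul]
      exact hpow_left i j (f x i) (f y i) (f z j).val
    · rw [if_neg hij, if_neg hij, if_neg hij, mul_one]
  have hα_right : ∀ x y z : V, mkAlpha u f x (y * z) = mkAlpha u f x y * mkAlpha u f x z := by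
    intro x y z
    show (∏ i, ∏ j, if i < j then u i j ^ ((f x i).val * (f (y*z) j).val) else 1)
      = (∏ i, ∏ j, if i < j then u i j ^ ((f x i).val * (f y j).val) else 1)
        * (∏ i, ∏ j, if i < j then u i j ^ ((f x i).val * (f z j).val) else 1)
    rw [← Finset.prod_mul_distrib]
    refine Finset.prod_congr rfl fun i _ => ?_
    rw [← Finset.prod_mul_distrib]
    refine Finset.prod_congr rfl fun j _ => ?_
    by_cases hij : i < j
    · rw [if_pos hij, if_pos hij, if_pos hij, hf_mul]
      exact hpow_right i j (f x i).val (f y j) (f z j)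
    · rw [if_neg hij, if_neg hij, if_neg hij, mul_one]
  have hα_one1 : ∀ y : V, mkAlpha u f 1 y = 1 := by
    intro y
    show (∏ i, ∏ j, if i < j then u i j ^ ((f 1 i).val * (f y j).val) else 1) = 1
    refine Finset.prod_eq_one fun i _ => Finset.prod_eq_one fun j _ => ?_
    by_cases hij : i < j
    · rw [if_pos hij, hf_one, ZMod.val_zero, zero_mul, pow_zero]
    · rw [if_neg hij]
  have hα_one2 : ∀ x : V, mkAlpha u f x 1 = 1 := by
    intro x
    show (∏ i, ∏ j, if i < j then u i j ^ ((f x i).val * (f 1 j).val) else 1) = 1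
    refine Finset.prod_eq_one fun i _ => Finset.prod_eq_one fun j _ => ?_
    by_cases hij : i < j
    · rw [if_pos hij, hf_one, ZMod.val_zero, mul_zero, pow_zero]
    · rw [if_neg hij]
  have hdecomp : ∀ x : V, x = ∏ i, g i ^ (f x i).val := by
    intro x
    have h0 : ∀ (i : ι), (Pi.single i (f x i) : ∀ j, ZMod (n j))
        = (f x i).val • (Pi.single i (1 : ZMod (n i)) : ∀ j, ZMod (n j)) := by
      intro i
      rw [← Pi.single_smul, nsmul_eq_mul, mul_one, ZMod.natCast_val, ZMod.cast_id]
    have h1 : Additive.ofMul x = ∑ i, (f x i).val • eP.symm (Pi.single i (1 : ZMod (n i))) := by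
      have h2 : eP (Additive.ofMul x) = ∑ i, Pi.single i (f x i) :=
        (Finset.univ_sum_single (f x)).symm
      calc Additive.ofMul x = eP.symm (eP (Additive.ofMul x)) := (eP.symm_apply_apply _).symm
        _ = ∑ i, (f x i).val • eP.symm (Pi.single i (1 : ZMod (n i))) := by
            rw [h2, map_sum]
            exact Finset.sum_congr rfl fun i _ => by rw [h0 i, map_nsmul]
    have h3 := congrArg Additive.toMul h1
    rw [toMul_ofMul, toMul_sum] at h3
    conv_lhs => rw [h3]
    exact Finset.prod_congr rfl fun i _ => by rw [toMul_nsmul]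
  have hω_expand : ∀ x y : V, ω x y = ∏ i, ∏ j, u i j ^ ((f x i).val * (f y j).val) := by
    intro x y
    have e1 : ω x y = ∏ i, ω (g i) y ^ (f x i).val := by
      conv_lhs => rw [hdecomp x]
      exact (map_prod (Φ y) (fun i => g i ^ (f x i).val) Finset.univ).trans
        (Finset.prod_congr rfl fun i _ => map_pow (Φ y) _ _)
    have e2 : ∀ i : ι, ω (g i) y = ∏ j, u i j ^ (f y j).val := by
      intro i
      conv_lhs => rw [hdecomp y]
      exact (map_prod (Ψ (g i)) (fun j => g j ^ (f y j).val) Finset.univ).trans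
        (Finset.prod_congr rfl fun j _ => map_pow (Ψ (g i)) _ _)
    rw [e1]
    refine Finset.prod_congr rfl fun i _ => ?_
    rw [e2 i, ← Finset.prod_pow]
    refine Finset.prod_congr rfl fun j _ => ?_
    rw [← pow_mul, Nat.mul_comm]
  have hsw : ∀ x y : V, (mkAlpha u f y x)⁻¹
      = ∏ i, ∏ j, if j < i then u i j ^ ((f x i).val * (f y j).val) else 1 := by
    intro x y
    show (∏ i, ∏ j, if i < j then u i j ^ ((f y i).val * (f x j).val) else 1)⁻¹ = _
    simp_rw [← Finset.prod_inv_distrib]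
    rw [Finset.prod_comm]
    refine Finset.prod_congr rfl fun i _ => Finset.prod_congr rfl fun j _ => ?_
    by_cases h : j < i
    · rw [if_pos h, if_pos h, ← inv_pow, hskew (g i) (g j), Nat.mul_comm]
    · rw [if_neg h, if_neg h, inv_one]
  refine ⟨mkAlpha u f, ⟨fun x => ⟨hα_one1 x, hα_one2 x⟩, fun x y z => ?_⟩, fun x y => ?_⟩
  · rw [hα_left, hα_right, ← Units.val_inj]
    push_cast
    ring
  · rw [hsw x y, hω_expand x y]
    show (∏ i, ∏ j, if i < j then u i j ^ ((f x i).val * (f y j).val) else 1) *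
        (∏ i, ∏ j, if j < i then u i j ^ ((f x i).val * (f y j).val) else 1)
        = ∏ i, ∏ j, u i j ^ ((f x i).val * (f y j).val)
    rw [← Finset.prod_mul_distrib]
    refine Finset.prod_congr rfl fun i _ => ?_
    rw [← Finset.prod_mul_distrib]
    refine Finset.prod_congr rfl fun j _ => ?_
    rcases lt_trichotomy i j with h | h | h
    · rw [if_pos h, if_neg (lt_asymm h), mul_one]
    · subst h
      have hui : u i i = 1 := hdiag (g i)
      rw [if_neg (lt_irrefl i), one_mul, hui, one_pow]
    · rw [if_neg (lt_asymm h), if_pos h, one_mul]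

end S3Aux

/-- For a finite abelian group `V` and a field `k` with divisible unit group,
the map `Alt : α ↦ ((x,y) ↦ α(x,y)/α(y,x))` sends 2-cocycles to
skew-symmetric bicharacters, is a group homomorphism, and induces an
isomorphism `H²(V,k*) ≅ ∧²V̂`: it is surjective onto skew-symmetric
bicharacters, and two cocycles have the same image iff they differ by a
coboundary. -/
theorem stmt_3 (V : Type) [CommGroup V] [Fintype V] (k : Type) [Field k]
    (hdiv : ∀ m : ℕ, m ≠ 0 → ∀ a : kˣ, ∃ b : kˣ, b ^ m = a) :
    (∀ α : V → V → kˣ, IsCocycle3 α →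
      IsSkewBichar3 (fun x y => α x y * (α y x)⁻¹)) ∧
    (∀ α β : V → V → kˣ, ∀ x y : V,
      (α x y * β x y) * ((α y x * β y x))⁻¹
        = (α x y * (α y x)⁻¹) * (β x y * (β y x)⁻¹)) ∧
    (∀ ω : V → V → kˣ, IsSkewBichar3 ω →
      ∃ α : V → V → kˣ, IsCocycle3 α ∧ ∀ x y, α x y * (α y x)⁻¹ = ω x y) ∧
    (∀ α β : V → V → kˣ, IsCocycle3 α → IsCocycle3 β →
      ((∀ x y, α x y * (α y x)⁻¹ = β x y * (β y x)⁻¹) ↔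
        IsCoboundary3 (fun x y => α x y * (β x y)⁻¹))) := by
  refine ⟨?_, ?_, ?_, ?_⟩
  · -- Alt sends cocycles to skew-symmetric bicharacters
    rintro α ⟨hn, hc⟩
    obtain ⟨h1, h2, h3⟩ := alt_skew hn hc
    exact ⟨fun x y z => h1 x y z, fun x y z => h2 x y z, fun x => h3 x⟩
  · -- Alt is a group homomorphism
    intro α β x y
    rw [← Units.val_inj]; push_cast; field_simp
  · -- surjectivity
    rintro ω ⟨hm1, hm2, hd⟩
    obtain ⟨α, hα, halt⟩ := skew_surj ω hm1 hm2 hd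
    exact ⟨α, hα, halt⟩
  · -- kernel characterization
    rintro α β ⟨hnα, hcα⟩ ⟨hnβ, hcβ⟩
    constructor
    · intro h
      have hnγ : ∀ x : V, α 1 x * (β 1 x)⁻¹ = 1 ∧ α x 1 * (β x 1)⁻¹ = 1 := by
        intro x
        rw [(hnα x).1, (hnα x).2, (hnβ x).1, (hnβ x).2]
        simp
      have hcγ : ∀ x y z : V,
          (α x y * (β x y)⁻¹) * (α (x * y) z * (β (x * y) z)⁻¹)
            = (α y z * (β y z)⁻¹) * (α x (y * z) * (β x (y * z))⁻¹) := by
        intro x y z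
        rw [cocycle_rw hcα x y z, cocycle_rw hcβ x y z, ← Units.val_inj]
        push_cast; field_simp
      have hsγ : ∀ x y : V, α x y * (β x y)⁻¹ = α y x * (β y x)⁻¹ := by
        intro x y
        have hxy := h x y
        rw [mul_inv_eq_iff_eq_mul.mp hxy, ← Units.val_inj]
        push_cast; field_simp
      obtain ⟨η, hη1, hη⟩ := symm_cocycle_coboundary hdiv
        (fun x y => α x y * (β x y)⁻¹) hnγ hcγ hsγ
      exact ⟨η, hη1, hη⟩
    · rintro ⟨η, hη1, hη⟩ x y
      have e1 : α x y * (β x y)⁻¹ = η x * η y * (η (x * y))⁻¹ := hη x y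
      have e2 : α y x * (β y x)⁻¹ = η y * η x * (η (y * x))⁻¹ := hη y x
      rw [mul_comm y x] at e2
      rw [mul_inv_eq_iff_eq_mul.mp e1, mul_inv_eq_iff_eq_mul.mp e2, ← Units.val_inj]
      push_cast; field_simp
end

section
/- Let N be a group, A an abelian group with trivial N-action (multiplicative notation), and σ ∈ Z²(N,A) a normalized 2-cocycle. Define γ_σ(x,y) = σ(x,y)·σ(xy,x^{-1})·σ(x,x^{-1})^{-1}. Then the pair (σ, γ_σ) satisfies: σ(x,y)γ_σ(g, xy) = σ(ᵍx, ᵍy)γ_σ(g,x)γ_σ(g,y) and γ_σ(gh, x) = γ_σ(h,x)·γ_σ(g, ʰx) for all g,h,x,y ∈ N, where ᵍx = gxg^{-1}. -/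
/-- Let `σ ∈ Z²(N,A)` be a normalized 2-cocycle (trivial action on the
abelian group `A`) and `γ_σ(x,y) = σ(x,y)·σ(xy,x⁻¹)·σ(x,x⁻¹)⁻¹`.  Then
`(σ, γ_σ)` satisfies the cocycle conditions (C2) and (C3) for the conjugation
action of `N` on itself. -/
theorem stmt_13 (N : Type) [Group N] (A : Type) [CommGroup A]
    (σ : N → N → A)
    (hnorm : ∀ x, σ 1 x = 1 ∧ σ x 1 = 1)
    (hcoc : ∀ x y z, σ x y * σ (x * y) z = σ y z * σ x (y * z)) :
    let γ : N → N → A := fun x y => σ x y * σ (x * y) x⁻¹ * (σ x x⁻¹)⁻¹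
    (∀ g x y, σ x y * γ g (x * y)
        = σ (g * x * g⁻¹) (g * y * g⁻¹) * γ g x * γ g y) ∧
    (∀ g h x, γ (g * h) x = γ h x * γ g (h * x * h⁻¹)) := by
  intro γ
  -- σ g g⁻¹ = σ g⁻¹ g
  have hinv : ∀ g : N, σ g g⁻¹ = σ g⁻¹ g := by
    intro g
    have h := hcoc g g⁻¹ g
    simpa [(hnorm g).2, (hnorm g).1] using h
  -- key formula : γ g x = σ g x / σ (g x g⁻¹) g
  have hγ : ∀ g x : N, γ g x = σ g x / σ (g * x * g⁻¹) g := by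
    intro g x
    have h := hcoc (g * x) g⁻¹ g
    simp only [inv_mul_cancel, mul_one, (hnorm (g * x)).2] at h
    -- h : σ (g*x) g⁻¹ * σ (g*x*g⁻¹) g = σ g⁻¹ g
    show σ g x * σ (g * x) g⁻¹ * (σ g g⁻¹)⁻¹ = σ g x / σ (g * x * g⁻¹) g
    rw [hinv g, div_eq_mul_inv, ← h]
    simp [mul_inv_rev, mul_comm, mul_left_comm, mul_assoc]
  constructor
  · intro g x y
    rw [hγ, hγ, hγ]
    have e1 := hcoc g x y
    have e2 := hcoc (g * x * g⁻¹) g y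
    have e3 := hcoc (g * x * g⁻¹) (g * y * g⁻¹) g
    have hx'g : g * x * g⁻¹ * g = g * x := by group
    have hy'g : g * y * g⁻¹ * g = g * y := by group
    have hx'y' : g * x * g⁻¹ * (g * y * g⁻¹) = g * (x * y) * g⁻¹ := by group
    rw [hx'g] at e2
    rw [hy'g, hx'y'] at e3
    have m2 : (σ x y * σ g (x * y)) * (σ (g * x * g⁻¹) g * σ (g * x) y) *
          (σ (g * y * g⁻¹) g * σ (g * x * g⁻¹) (g * y))
        = (σ g x * σ (g * x) y) * (σ g y * σ (g * x * g⁻¹) (g * y)) *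
          (σ (g * x * g⁻¹) (g * y * g⁻¹) * σ (g * (x * y) * g⁻¹) g) := by
      rw [← e1, e2, ← e3]
    have T2 : σ x y * σ g (x * y) * (σ (g * x * g⁻¹) g * σ (g * y * g⁻¹) g)
        = σ (g * x * g⁻¹) (g * y * g⁻¹) * σ g x * σ g y * σ (g * (x * y) * g⁻¹) g := by
      refine mul_right_cancel (b := σ (g * x) y * σ (g * x * g⁻¹) (g * y)) ?_
      calc σ x y * σ g (x * y) * (σ (g * x * g⁻¹) g * σ (g * y * g⁻¹) g) *
              (σ (g * x) y * σ (g * x * g⁻¹) (g * y))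
          = (σ x y * σ g (x * y)) * (σ (g * x * g⁻¹) g * σ (g * x) y) *
              (σ (g * y * g⁻¹) g * σ (g * x * g⁻¹) (g * y)) := by ac_rfl
        _ = (σ g x * σ (g * x) y) * (σ g y * σ (g * x * g⁻¹) (g * y)) *
              (σ (g * x * g⁻¹) (g * y * g⁻¹) * σ (g * (x * y) * g⁻¹) g) := m2
        _ = σ (g * x * g⁻¹) (g * y * g⁻¹) * σ g x * σ g y * σ (g * (x * y) * g⁻¹) g *
              (σ (g * x) y * σ (g * x * g⁻¹) (g * y)) := by ac_rfl
    rw [← mul_div_assoc, ← mul_div_assoc, mul_div_assoc', div_mul_eq_mul_div,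
      div_div, div_eq_div_iff_mul_eq_mul]
    exact T2
  · intro g h x
    rw [hγ, hγ, hγ]
    have e1 := hcoc g h x
    have e2 := hcoc g (h * x * h⁻¹) h
    have e3 := hcoc (g * (h * x * h⁻¹) * g⁻¹) g h
    have huh : h * x * h⁻¹ * h = h * x := by group
    have hgu : g * (h * x * h⁻¹) = g * h * x * h⁻¹ := by group
    have hvg : g * (h * x * h⁻¹) * g⁻¹ * g = g * h * x * h⁻¹ := by group
    rw [huh, hgu] at e2
    rw [hvg] at e3
    -- e1 : σ g h * σ (g*h) x = σ h x * σ g (h*x)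
    -- e2 : σ g (h*x*h⁻¹) * σ (g*h*x*h⁻¹) h = σ (h*x*h⁻¹) h * σ g (h*x)
    -- e3 : σ v g * σ (g*h*x*h⁻¹) h = σ g h * σ v (g*h)
    have hc : g * h * x * (g * h)⁻¹ = g * (h * x * h⁻¹) * g⁻¹ := by group
    rw [hc]
    have m3 : (σ g h * σ (g * h) x) * (σ (h * x * h⁻¹) h * σ g (h * x)) *
          (σ (g * (h * x * h⁻¹) * g⁻¹) g * σ (g * h * x * h⁻¹) h)
        = (σ h x * σ g (h * x)) * (σ g (h * x * h⁻¹) * σ (g * h * x * h⁻¹) h) *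
          (σ g h * σ (g * (h * x * h⁻¹) * g⁻¹) (g * h)) := by
      rw [e1, ← e2, e3]
    have T3 : σ (g * h) x * (σ (h * x * h⁻¹) h * σ (g * (h * x * h⁻¹) * g⁻¹) g)
        = σ h x * σ g (h * x * h⁻¹) * σ (g * (h * x * h⁻¹) * g⁻¹) (g * h) := by
      refine mul_right_cancel
        (b := σ g h * σ g (h * x) * σ (g * h * x * h⁻¹) h) ?_
      calc σ (g * h) x * (σ (h * x * h⁻¹) h * σ (g * (h * x * h⁻¹) * g⁻¹) g) *
              (σ g h * σ g (h * x) * σ (g * h * x * h⁻¹) h)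
          = (σ g h * σ (g * h) x) * (σ (h * x * h⁻¹) h * σ g (h * x)) *
              (σ (g * (h * x * h⁻¹) * g⁻¹) g * σ (g * h * x * h⁻¹) h) := by ac_rfl
        _ = (σ h x * σ g (h * x)) * (σ g (h * x * h⁻¹) * σ (g * h * x * h⁻¹) h) *
              (σ g h * σ (g * (h * x * h⁻¹) * g⁻¹) (g * h)) := m3
        _ = σ h x * σ g (h * x * h⁻¹) * σ (g * (h * x * h⁻¹) * g⁻¹) (g * h) *
              (σ g h * σ g (h * x) * σ (g * h * x * h⁻¹) h) := by ac_rfl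
    rw [div_mul_div_comm, div_eq_div_iff_mul_eq_mul]
    exact T3
end

section
/- Let V be a finite abelian group of exponent n, k a field, and σ ∈ Z²(V, k*) a non-degenerate 2-cocycle, meaning the skew-symmetric form Alt(σ)(x,y) = σ(x,y)/σ(y,x) is a non-degenerate bicharacter. Then k contains a primitive n-th root of unity. -/
/-- If a finite abelian group `V` of exponent `n` admits a non-degenerate
2-cocycle `σ` with values in `k*` (i.e. `Alt(σ)(x,y) = σ(x,y)/σ(y,x)` is a
non-degenerate bicharacter), then `k` contains a primitive `n`-th root of
unity. -/
theorem stmt_15 (V : Type) [CommGroup V] [Fintype V] (n : ℕ)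
    (hexp : Monoid.exponent V = n) (k : Type) [Field k]
    (σ : V → V → kˣ)
    (hnorm : ∀ x, σ 1 x = 1 ∧ σ x 1 = 1)
    (hcoc : ∀ x y z, σ x y * σ (x * y) z = σ y z * σ x (y * z))
    (hb1 : ∀ x y z, σ (x * y) z * (σ z (x * y))⁻¹
        = (σ x z * (σ z x)⁻¹) * (σ y z * (σ z y)⁻¹))
    (hb2 : ∀ x y z, σ x (y * z) * (σ (y * z) x)⁻¹
        = (σ x y * (σ y x)⁻¹) * (σ x z * (σ z x)⁻¹))
    (hnd : ∀ x : V, (∀ y : V, σ x y * (σ y x)⁻¹ = 1) → x = 1) :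
    ∃ ζ : k, IsPrimitiveRoot ζ n := by
  classical
  -- the bicharacter as a monoid hom in each variable
  let χ : V → V →* kˣ := fun x =>
    { toFun := fun y => σ x y * (σ y x)⁻¹
      map_one' := by show σ x 1 * (σ 1 x)⁻¹ = 1; rw [(hnorm x).2, (hnorm x).1]; simp
      map_mul' := fun y z => hb2 x y z }
  let B : V →* (V →* kˣ) :=
    { toFun := χ
      map_one' := MonoidHom.ext fun y => show σ 1 y * (σ y 1)⁻¹ = 1 by
        rw [(hnorm y).1, (hnorm y).2]; simp
      map_mul' := fun a b => MonoidHom.ext fun z => hb1 a b z }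
  have hEE : Monoid.ExponentExists V := Monoid.ExponentExists.of_finite
  obtain ⟨x, hx⟩ := Monoid.exists_orderOf_eq_exponent hEE
  rw [hexp] at hx
  -- the range of `B x` in `kˣ`
  set H : Subgroup kˣ := (B x).range with hH
  have : Finite H := Set.finite_range _
  have hEEH : Monoid.ExponentExists H := Monoid.ExponentExists.of_finite
  -- exponent of H divides n
  have h1 : Monoid.exponent H ∣ n := by
    apply Monoid.exponent_dvd_of_forall_pow_eq_one
    rintro ⟨u, y, rfl⟩
    have : (B x) y ^ n = 1 := by
      rw [← map_pow, ← hexp, Monoid.pow_exponent_eq_one, map_one]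
    ext
    push_cast [this]
    rfl
  -- n divides the exponent of H
  have h2 : n ∣ Monoid.exponent H := by
    rw [← hx]
    apply orderOf_dvd_of_pow_eq_one
    apply hnd
    intro y
    have hmem : (B x) y ∈ H := ⟨y, rfl⟩
    have : (⟨(B x) y, hmem⟩ : H) ^ Monoid.exponent H = 1 :=
      Monoid.pow_exponent_eq_one _
    have hval : (B x) y ^ Monoid.exponent H = 1 := by
      have := congrArg (Subtype.val) this
      push_cast at this
      exact this
    have hB : B (x ^ Monoid.exponent H) y = (B x) y ^ Monoid.exponent H := by
      rw [map_pow]; rfl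
    exact hB.trans hval
  have hne : Monoid.exponent H = n := Nat.dvd_antisymm h1 h2
  obtain ⟨g, hg⟩ := Monoid.exists_orderOf_eq_exponent hEEH
  rw [hne] at hg
  refine ⟨((g : kˣ) : k), ?_⟩
  rw [IsPrimitiveRoot.coe_units_iff, ← hg, ← Subgroup.orderOf_coe]
  exact IsPrimitiveRoot.orderOf _
end

section
/- Let V be a finite abelian group of odd order, k a field, and ω : V × V → k* a non-degenerate skew-symmetric bicharacter. Given a decomposition V = U ⊕ W with ω(u,u')=1 for u,u' ∈ U and ω(w,w')=1 for w,w' ∈ W (a Lagrangian decomposition), the twisted group algebra k_ω[V] (basis u_v, v ∈ V, with u_v u_{v'} = ω-twisted product via a 2-cocycle with alternation ω) acts irreducibly on the k-vector space with basis {t_b : b ∈ U} via u_{x⊕y}·t_b = ω(y,b)·t_{x+b}, and this makes the span a module over the twisted group algebra with the bicharacter 2-cocycle α(x⊕y, x'⊕y') = ω(y,x'). -/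
/-- Let `V = U ⊕ W` be a Lagrangian decomposition of a finite abelian group
of odd order with a non-degenerate skew-symmetric bicharacter `ω` valued in
`k*`, and let `α(x⊕y, x'⊕y') = ω(y,x')` be the associated bicharacter
2-cocycle (which satisfies `Alt(α) = ω`).  Then the formula
`u_{x⊕y}·t_b = ω(y,b)·t_{x+b}` defines an action of the twisted group algebra
`k_α[V]` on the span of `{t_b : b ∈ U}`, and this action is irreducible. -/
theorem stmt_16 (k : Type) [Field k]
    (U W : Type) [AddCommGroup U] [AddCommGroup W] [Fintype U] [Fintype W]
    (hodd : Odd (Fintype.card (U × W)))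
    (ω : U × W → U × W → kˣ)
    (hb1 : ∀ v v' v'' : U × W, ω (v + v') v'' = ω v v'' * ω v' v'')
    (hb2 : ∀ v v' v'' : U × W, ω v (v' + v'') = ω v v' * ω v v'')
    (hskew : ∀ v : U × W, ω v v = 1)
    (hnd : ∀ v : U × W, (∀ v', ω v v' = 1) → v = 0)
    (hU : ∀ u u' : U, ω (u, 0) (u', 0) = 1)
    (hW : ∀ w w' : W, ω (0, w) (0, w') = 1) :
    let α : U × W → U × W → kˣ := fun v v' => ω (0, v.2) (v'.1, 0)
    let ρ : U × W → (U → k) → (U → k) :=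
      fun v f c => ((ω (0, v.2) (c - v.1, 0) : kˣ) : k) * f (c - v.1)
    (∀ v v', α v v' * (α v' v)⁻¹ = ω v v') ∧
    (∀ (v v' : U × W) (f : U → k),
      ρ v (ρ v' f) = fun c => ((α v v' : kˣ) : k) * ρ (v + v') f c) ∧
    (∀ f : U → k, ρ 0 f = f) ∧
    (∀ S : Submodule k (U → k),
      (∀ v f, f ∈ S → ρ v f ∈ S) → S = ⊥ ∨ S = ⊤) := by
  classical
  intro α ρ
  -- basic facts about ω
  have hzero : ∀ v : U × W, ω 0 v = 1 := by
    intro v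
    have h := hb1 0 0 v
    rw [add_zero] at h
    exact (left_eq_mul.mp h)
  have hzero' : ∀ v : U × W, ω v 0 = 1 := by
    intro v
    have h := hb2 v 0 0
    rw [add_zero] at h
    exact (left_eq_mul.mp h)
  have hsk : ∀ v v' : U × W, ω v v' * ω v' v = 1 := by
    intro v v'
    have h := hskew (v + v')
    rw [hb1, hb2, hb2, hskew, hskew, one_mul, mul_one] at h
    exact h
  have hpowgen : ∀ (n : ℕ) (v v' : U × W), ω (n • v) v' = (ω v v') ^ n := by
    intro n v v'
    induction n with
    | zero => simp [hzero]
    | succ m ih => rw [succ_nsmul, hb1, ih, pow_succ]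
  refine ⟨?_, ?_, ?_, ?_⟩
  · -- Alt(α) = ω
    rintro ⟨x, y⟩ ⟨x', y'⟩
    show ω (0, y) (x', 0) * (ω (0, y') (x, 0))⁻¹ = ω (x, y) (x', y')
    have h1 : ω (x, y) (x', y') = ω (x, 0) (0, y') * ω (0, y) (x', 0) := by
      have e1 : ((x, y) : U × W) = (x, 0) + (0, y) := by simp
      have e2 : ((x', y') : U × W) = (x', 0) + (0, y') := by simp
      rw [e1, hb1, e2, hb2, hb2, hU, hW, one_mul, mul_one]
    have h2 : (ω (0, y') (x, 0))⁻¹ = ω (x, 0) (0, y') := by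
      have h3 := hsk (0, y') (x, 0)
      exact inv_eq_of_mul_eq_one_right h3
    rw [h1, h2, mul_comm]
  · -- twisted action equation
    rintro ⟨x, y⟩ ⟨x', y'⟩ f
    funext c
    show ((ω (0, y) (c - x, 0) : kˣ) : k) *
        (((ω (0, y') (c - x - x', 0) : kˣ) : k) * f (c - x - x')) =
        ((ω (0, y) (x', 0) : kˣ) : k) *
        (((ω (0, y + y') (c - (x + x'), 0) : kˣ) : k) * f (c - (x + x')))
    rw [sub_sub]
    have h1 : ω (0, y) (c - (x + x'), 0) * ω (0, y') (c - (x + x'), 0)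
        = ω (0, y + y') (c - (x + x'), 0) := by
      have e : ((0, y + y') : U × W) = (0, y) + (0, y') := by simp
      rw [e, hb1]
    have h2 : ω (0, y) (c - x, 0)
        = ω (0, y) (x', 0) * ω (0, y) (c - (x + x'), 0) := by
      have e : ((x', (0 : W)) : U × W) + (c - (x + x'), 0) = (c - x, 0) := by
        rw [Prod.mk_add_mk, add_zero]
        congr 1
        abel
      rw [← e, hb2]
    rw [h2, ← h1, Units.val_mul, Units.val_mul]
    ring
  · -- identity
    intro f
    funext c
    show ((ω (0, (0 : W)) (c - 0, 0) : kˣ) : k) * f (c - 0) = f c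
    rw [sub_zero, Prod.mk_zero_zero, hzero, Units.val_one, one_mul]
  · -- irreducibility
    intro S hS
    by_cases hbot : S = ⊥
    · exact Or.inl hbot
    right
    obtain ⟨f, hfS, hf0⟩ := Submodule.ne_bot_iff S |>.mp hbot
    obtain ⟨c₀, hfc₀⟩ := Function.ne_iff.mp hf0
    simp only [Pi.zero_apply] at hfc₀
    have hρ : ∀ (x : U) (y : W) (f : U → k) (c : U),
        ρ (x, y) f c = ((ω (0, y) (c - x, 0) : kˣ) : k) * f (c - x) := fun _ _ _ _ => rfl
    -- character sums vanish for nontrivial characters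
    have hsum0 : ∀ c : U, c ≠ 0 → ∑ y : W, ((ω (0, y) (c, 0) : kˣ) : k) = 0 := by
      intro c hc
      have hnt : ∃ y : W, ω (0, y) (c, 0) ≠ 1 := by
        by_contra h
        push_neg at h
        apply hc
        have hz : ((c, (0 : W)) : U × W) = 0 := by
          apply hnd
          rintro ⟨x', y'⟩
          have e : ((x', y') : U × W) = (x', 0) + (0, y') := by simp
          rw [e, hb2, hU, one_mul]
          have h2 := hsk (c, 0) (0, y')
          rw [mul_comm, h y'] at h2
          rw [one_mul] at h2
          exact h2
        exact congrArg Prod.fst hz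
      obtain ⟨y₀, hy₀⟩ := hnt
      have key : ((ω (0, y₀) (c, 0) : kˣ) : k) * ∑ y : W, ((ω (0, y) (c, 0) : kˣ) : k)
          = ∑ y : W, ((ω (0, y) (c, 0) : kˣ) : k) := by
        rw [Finset.mul_sum]
        have hre := Fintype.sum_equiv (Equiv.addLeft y₀)
          (fun y => ((ω (0, y₀ + y) (c, 0) : kˣ) : k))
          (fun y => ((ω (0, y) (c, 0) : kˣ) : k)) (fun y => rfl)
        rw [← hre]
        apply Finset.sum_congr rfl
        intro y _
        show ((ω (0, y₀) (c, 0) : kˣ) : k) * ((ω (0, y) (c, 0) : kˣ) : k)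
          = ((ω (0, y₀ + y) (c, 0) : kˣ) : k)
        have e : ((0, y₀ + y) : U × W) = (0, y₀) + (0, y) := by simp
        rw [e, hb1, Units.val_mul]
      have hfact : (((ω (0, y₀) (c, 0) : kˣ) : k) - 1)
          * ∑ y : W, ((ω (0, y) (c, 0) : kˣ) : k) = 0 := by
        linear_combination key
      rcases mul_eq_zero.mp hfact with h | h
      · exact absurd (Units.ext (by simpa using sub_eq_zero.mp h)) hy₀
      · exact h
    -- char k does not divide |W|
    have hcardW : (Fintype.card W : k) ≠ 0 := by
      intro h0
      set p := ringChar k with hp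
      haveI hchar : CharP k p := ringChar.charP k
      have hpdvd : p ∣ Fintype.card W := (CharP.cast_eq_zero_iff k p _).mp h0
      have hppos : p ≠ 0 := by
        rintro hpz
        rw [hpz] at hpdvd
        have hcz : Fintype.card W = 0 := by simpa using hpdvd
        haveI : Nonempty W := ⟨0⟩
        exact Fintype.card_ne_zero hcz
      have hprime : Nat.Prime p := (CharP.char_is_prime_or_zero k p).resolve_right hppos
      haveI : Fact (Nat.Prime p) := ⟨hprime⟩
      obtain ⟨y, hy⟩ := exists_prime_addOrderOf_dvd_card (G := W) p hpdvd
      have hyne : y ≠ 0 := by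
        intro h
        rw [h, addOrderOf_zero] at hy
        exact hprime.one_lt.ne' hy.symm
      have hall : ∀ v', ω (0, y) v' = 1 := by
        rintro ⟨x', y'⟩
        have e : ((x', y') : U × W) = (x', 0) + (0, y') := by simp
        rw [e, hb2, hW, mul_one]
        have hpow : (ω (0, y) (x', 0)) ^ p = 1 := by
          rw [← hpowgen]
          have e2 : p • ((0, y) : U × W) = 0 := by
            have : p • y = 0 := by rw [← hy]; exact addOrderOf_nsmul_eq_zero y
            simp [Prod.ext_iff, this]
          rw [e2, hzero]
        have hval : ((ω (0, y) (x', 0) : kˣ) : k) ^ p = 1 := by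
          rw [← Units.val_pow_eq_pow_val, hpow, Units.val_one]
        have hsub : (((ω (0, y) (x', 0) : kˣ) : k) - 1) ^ p = 0 := by
          rw [sub_pow_char, hval, one_pow, sub_self]
        have := pow_eq_zero_iff hprime.pos.ne' |>.mp hsub
        exact Units.ext (by simpa using sub_eq_zero.mp this)
      have hz := hnd (0, y) hall
      exact hyne (congrArg Prod.snd hz)
    -- build the delta function at c₀
    set δ : U → (U → k) := fun i j => if i = j then 1 else 0 with hδdef
    set g : U → k := ∑ y : W, (((ω (0, y) (c₀, 0))⁻¹ : kˣ) : k) • ρ (0, y) f with hgdef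
    have hgS : g ∈ S :=
      Submodule.sum_mem S fun y _ => Submodule.smul_mem S _ (hS (0, y) f hfS)
    have hg : ∀ c, g c = (∑ y : W, ((ω (0, y) (c - c₀, 0) : kˣ) : k)) * f c := by
      intro c
      rw [hgdef]
      rw [Finset.sum_apply, Finset.sum_mul]
      apply Finset.sum_congr rfl
      intro y _
      rw [Pi.smul_apply, smul_eq_mul, hρ, sub_zero]
      have e : ω (0, y) (c, 0) = ω (0, y) (c₀, 0) * ω (0, y) (c - c₀, 0) := by
        have e2 : ((c₀, (0 : W)) : U × W) + (c - c₀, 0) = (c, 0) := by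
          rw [Prod.mk_add_mk, add_zero]
          congr 1
          abel
        rw [← e2, hb2]
      rw [e, Units.val_mul]
      field_simp
      rw [Units.inv_mul, one_mul]
    have hgc : ∀ c, g c = if c = c₀ then (Fintype.card W : k) * f c₀ else 0 := by
      intro c
      rw [hg]
      by_cases hc : c = c₀
      · subst hc
        rw [if_pos rfl]
        congr 1
        have : ∀ y : W, ((ω (0, y) (c - c, 0) : kˣ) : k) = 1 := by
          intro y
          rw [sub_self, Prod.mk_zero_zero, hzero', Units.val_one]
        rw [Finset.sum_congr rfl fun y _ => this y]
        simp [Finset.card_univ]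
      · rw [if_neg hc, hsum0 (c - c₀) (sub_ne_zero.mpr hc), zero_mul]
    have hδ0 : δ c₀ ∈ S := by
      have hne : (Fintype.card W : k) * f c₀ ≠ 0 := mul_ne_zero hcardW hfc₀
      have hmem : ((Fintype.card W : k) * f c₀)⁻¹ • g ∈ S := S.smul_mem _ hgS
      have heq : δ c₀ = ((Fintype.card W : k) * f c₀)⁻¹ • g := by
        funext c
        rw [Pi.smul_apply, smul_eq_mul, hgc]
        by_cases hc : c = c₀
        · subst hc
          rw [if_pos rfl, inv_mul_cancel₀ hne, hδdef]
          simp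
        · rw [if_neg hc, mul_zero, hδdef]
          simp [Ne.symm hc]
      rw [heq]; exact hmem
    have hδ : ∀ c, δ c ∈ S := by
      intro c
      have hmem := hS (c - c₀, 0) (δ c₀) hδ0
      have heq : ρ (c - c₀, 0) (δ c₀) = δ c := by
        funext c'
        rw [hρ]
        rw [Prod.mk_zero_zero, hzero, Units.val_one, one_mul]
        rw [hδdef]
        by_cases hcc : c = c'
        · subst hcc
          simp
        · have : ¬ (c₀ = c' - (c - c₀)) := by
            intro h
            apply hcc
            have : c' - (c - c₀) - c₀ = 0 := by rw [← h]; abel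
            have h2 : c' - c = 0 := by rw [← this]; abel
            have := sub_eq_zero.mp h2
            exact this.symm
          simp [this, hcc]
      rw [← heq]; exact hmem
    rw [eq_top_iff]
    intro f' _
    rw [pi_eq_sum_univ f']
    exact Submodule.sum_mem S fun c _ => S.smul_mem _ (hδ c)
end

section
/- Let G be a finite group, S ≤ G, and B an S-algebra over a field k which is a simple algebra such that the central primitive idempotents of Ind_S^G(B) are the characteristic functions χ_{Sg} of the right cosets of S. Then every G-equivariant algebra automorphism F of Ind_S^G(B) with F(χ_{Sg}) = χ_{Sg} for all g ∈ G is of the form Ind_S^G(T) for a unique S-equivariant algebra automorphism T of B; in particular the induction map Aut_S(B) → Aut_G(Ind_S^G(B)) is injective with image the subgroup of automorphisms fixing all the idempotents χ_{Sg}. -/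
/-- Let `S ≤ G`, `B` a simple `S`-algebra over a field `k` such that the
central primitive idempotents of `Ind_S^G(B)` are exactly the characteristic
functions `χ_{Sg}` of the right cosets of `S`.  Then every `G`-equivariant
algebra automorphism `F` of `Ind_S^G(B)` fixing all `χ_{Sg}` equals
`Ind_S^G(T)` (i.e. `r ↦ T ∘ r`) for a unique `S`-equivariant algebra
automorphism `T` of `B`; moreover the induction map `Aut_S(B) →
Aut_G(Ind_S^G(B))` is injective and its image consists of automorphisms
fixing all the idempotents `χ_{Sg}`. -/
theorem stmt_19 (k : Type) [Field k] (G : Type) [Group G] [Fintype G]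
    (S : Subgroup G) [DecidablePred (· ∈ S)] (B : Type) [Ring B] [Algebra k B] [IsSimpleRing B]
    (act : S →* (B ≃ₐ[k] B)) :
    let Ind : Set (G → B) :=
      {r | ∀ (s : S) (x : G), r ((s : G) * x) = act s (r x)}
    let χ : G → (G → B) := fun g x => if x * g⁻¹ ∈ S then 1 else 0
    let IsCentralIdem : (G → B) → Prop := fun e =>
      e ∈ Ind ∧ e * e = e ∧ ∀ r ∈ Ind, e * r = r * e
    (∀ e : G → B,
      (IsCentralIdem e ∧ e ≠ 0 ∧
        ∀ e₁ e₂ : G → B, IsCentralIdem e₁ → IsCentralIdem e₂ →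
          e₁ ≠ 0 → e₂ ≠ 0 → e₁ * e₂ = 0 → e ≠ e₁ + e₂) ↔
        ∃ g : G, e = χ g) →
    (∀ F : (G → B) → (G → B),
      Set.BijOn F Ind Ind →
      (∀ r r', r ∈ Ind → r' ∈ Ind → F (r * r') = F r * F r') →
      (∀ r r', r ∈ Ind → r' ∈ Ind → F (r + r') = F r + F r') →
      (∀ (c : k) (r : G → B), r ∈ Ind → F (c • r) = c • F r) →
      F (1 : G → B) = 1 →
      (∀ (a : G) (r : G → B), r ∈ Ind →
        F (fun x => r (x * a)) = fun x => F r (x * a)) →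
      (∀ g : G, F (χ g) = χ g) →
      ∃! T : B ≃ₐ[k] B,
        (∀ (s : S) (b : B), T (act s b) = act s (T b)) ∧
        ∀ r ∈ Ind, F r = fun x => T (r x)) ∧
    (∀ T T' : B ≃ₐ[k] B,
      (∀ (s : S) (b : B), T (act s b) = act s (T b)) →
      (∀ (s : S) (b : B), T' (act s b) = act s (T' b)) →
      (∀ r ∈ Ind, (fun x => T (r x)) = fun x => T' (r x)) → T = T') ∧
    (∀ T : B ≃ₐ[k] B,
      (∀ (s : S) (b : B), T (act s b) = act s (T b)) →
      ∀ g : G, (fun x => T (χ g x)) = χ g) := by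
  intro Ind χ IsCentralIdem _hidem
  -- the "extension by zero" of an element of B
  set E : B → (G → B) := fun b x => if h : x ∈ S then act ⟨x, h⟩ b else 0 with hE
  have hE_mem : ∀ b : B, E b ∈ Ind := by
    intro b s x
    by_cases hx : x ∈ S
    · have hsx : (s : G) * x ∈ S := S.mul_mem s.2 hx
      have : (⟨(s : G) * x, hsx⟩ : S) = s * ⟨x, hx⟩ := rfl
      simp only [hE, hsx, hx, dif_pos, this, map_mul]
      rfl
    · have hsx : ¬ ((s : G) * x ∈ S) := by
        intro h
        exact hx (by simpa using S.mul_mem (S.inv_mem s.2) h)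
      simp [hE, hsx, hx]
  have hE_one : ∀ x : G, E 1 x = χ 1 x := by
    intro x
    by_cases hx : x ∈ S <;> simp [hE, χ, hx]
  have hE_at_one : ∀ b : B, E b 1 = b := by
    intro b
    have h1 : (⟨(1 : G), S.one_mem⟩ : S) = 1 := rfl
    simp [hE, S.one_mem, h1]
  have hE_at_s : ∀ (b : B) (s : S), E b (s : G) = act s b := by
    intro b s
    have : (⟨(s : G), s.2⟩ : S) = s := rfl
    simp [hE, s.2, this]
  -- injectivity (second bullet, also used for uniqueness)
  have inj : ∀ T T' : B ≃ₐ[k] B,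
      (∀ r ∈ Ind, (fun x => T (r x)) = fun x => T' (r x)) → T = T' := by
    intro T T' h
    ext b
    have := congrFun (h (E b) (hE_mem b)) 1
    simpa [hE_at_one] using this
  refine ⟨?_, fun T T' _ _ h => inj T T' h, ?_⟩
  · -- main part
    intro F hbij hmul hadd hsmul hone htrans hχ
    have hχmem : ∀ g : G, χ g ∈ Ind := by
      intro g s x
      have : (s : G) * x * g⁻¹ ∈ S ↔ x * g⁻¹ ∈ S := by
        constructor
        · intro h
          simpa [mul_assoc] using S.mul_mem (S.inv_mem s.2) h
        · intro h
          simpa [mul_assoc] using S.mul_mem s.2 h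
      by_cases hx : x * g⁻¹ ∈ S <;> simp [χ, this, hx]
    have hmulmem : ∀ r r' : (G → B), r ∈ Ind → r' ∈ Ind → r * r' ∈ Ind := by
      intro r r' hr hr' s x
      have : (r * r') ((s : G) * x) = r ((s : G) * x) * r' ((s : G) * x) := rfl
      rw [this, hr s x, hr' s x, ← map_mul]
      rfl
    have hχ11 : χ 1 (1 : G) = 1 := by simp [χ, S.one_mem]
    -- the candidate map
    set T0 : B → B := fun b => F (E b) 1 with hT0
    -- key identity:  F r x = T0 (r x)
    have key : ∀ r ∈ Ind, ∀ x : G, F r x = T0 (r x) := by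
      intro r hr x
      set rx : G → B := fun y => r (y * x) with hrx
      have hrxmem : rx ∈ Ind := by
        intro s y
        simp only [hrx, mul_assoc]
        exact hr s (y * x)
      have h1 : F r x = F rx 1 := by
        have := congrFun (htrans x r hr) 1
        simpa [hrx] using this.symm
      have h2 : χ 1 * rx = E (r x) := by
        funext y
        by_cases hy : y ∈ S
        · have : rx y = act ⟨y, hy⟩ (r x) := by
            have := hr ⟨y, hy⟩ x
            simpa [hrx] using this
          simp [χ, hE, hy, this]
        · simp [χ, hE, hy]
      have h3 : F (χ 1 * rx) 1 = F (χ 1) 1 * F rx 1 := by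
        rw [hmul _ _ (hχmem 1) hrxmem]; rfl
      have h4 : F (χ 1) 1 = 1 := by rw [hχ 1]; exact hχ11
      calc F r x = F rx 1 := h1
        _ = 1 * F rx 1 := by rw [one_mul]
        _ = F (χ 1) 1 * F rx 1 := by rw [h4]
        _ = F (χ 1 * rx) 1 := h3.symm
        _ = F (E (r x)) 1 := by rw [h2]
        _ = T0 (r x) := rfl
    -- T0 is a ring homomorphism
    have hE_mul : ∀ b b' : B, E (b * b') = E b * E b' := by
      intro b b'
      funext x
      by_cases hx : x ∈ S <;> simp [hE, hx, Pi.mul_apply]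
    have hE_add : ∀ b b' : B, E (b + b') = E b + E b' := by
      intro b b'
      funext x
      by_cases hx : x ∈ S <;> simp [hE, hx, Pi.add_apply]
    have hE_smul : ∀ (c : k) (b : B), E (c • b) = c • E b := by
      intro c b
      funext x
      by_cases hx : x ∈ S <;> simp [hE, hx, Pi.smul_apply]
    have hT0_one : T0 1 = 1 := by
      have : E (1 : B) = χ 1 := funext hE_one
      simp only [hT0, this, hχ 1]
      exact hχ11
    have hT0_mul : ∀ b b', T0 (b * b') = T0 b * T0 b' := by
      intro b b'
      simp only [hT0, hE_mul]
      rw [hmul _ _ (hE_mem b) (hE_mem b')]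
      rfl
    have hT0_add : ∀ b b', T0 (b + b') = T0 b + T0 b' := by
      intro b b'
      simp only [hT0, hE_add]
      rw [hadd _ _ (hE_mem b) (hE_mem b')]
      rfl
    have h0mem : (0 : G → B) ∈ Ind := by
      intro s x; simp
    have hF0 : F 0 = 0 := by
      have := hadd 0 0 h0mem h0mem
      simp only [add_zero] at this
      have h := congrArg (fun z => z - F 0) this
      simpa using h.symm
    have hT0_zero : T0 0 = 0 := by
      have : E (0 : B) = 0 := by
        funext x; by_cases hx : x ∈ S <;> simp [hE, hx]
      simp [hT0, this, hF0]
    have hT0_smul : ∀ (c : k) (b : B), T0 (c • b) = c • T0 b := by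
      intro c b
      simp only [hT0, hE_smul]
      rw [hsmul c _ (hE_mem b)]
      rfl
    have hT0_commutes : ∀ c : k, T0 (algebraMap k B c) = algebraMap k B c := by
      intro c
      have h1 : (algebraMap k B c) = c • (1 : B) := by
        rw [Algebra.smul_def, mul_one]
      rw [h1, hT0_smul, hT0_one]
    -- T0 as an AlgHom
    set T0' : B →ₐ[k] B :=
      { toFun := T0
        map_one' := hT0_one
        map_mul' := hT0_mul
        map_zero' := hT0_zero
        map_add' := hT0_add
        commutes' := hT0_commutes } with hT0'
    have hinj : Function.Injective T0' := RingHom.injective (T0' : B →+* B)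
    have hsurj : Function.Surjective T0' := by
      intro b
      obtain ⟨r, hr, hFr⟩ := hbij.surjOn (hE_mem b)
      refine ⟨r 1, ?_⟩
      have := key r hr 1
      rw [hFr] at this
      rw [hE_at_one] at this
      exact this.symm
    set T : B ≃ₐ[k] B := AlgEquiv.ofBijective T0' ⟨hinj, hsurj⟩ with hT
    have hTapp : ∀ b : B, T b = T0 b := fun _ => rfl
    have hequiv : ∀ (s : S) (b : B), T (act s b) = act s (T b) := by
      intro s b
      have hmem := hbij.mapsTo (hE_mem b)
      have h1 : F (E b) ((s : G) * 1) = act s (F (E b) 1) := hmem s 1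
      have h2 : F (E b) (s : G) = T0 (act s b) := by
        have := key (E b) (hE_mem b) (s : G)
        rwa [hE_at_s] at this
      rw [hTapp, hTapp]
      have : ((s : G) * 1) = (s : G) := mul_one _
      rw [this] at h1
      rw [h2] at h1
      exact h1
    refine ⟨T, ⟨hequiv, ?_⟩, ?_⟩
    · intro r hr
      funext x
      exact key r hr x
    · intro T' ⟨_, hT'⟩
      apply inj
      intro r hr
      rw [← hT' r hr]
      funext x
      exact key r hr x
  · -- third bullet
    intro T _ g
    funext x
    by_cases hx : x * g⁻¹ ∈ S <;> simp [χ, hx]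
end
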